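/- Let X ~ N(a√(2 ln D), 1 − a²) and Y ~ N(b√(2 ln D), 1 − b²) be independent, where −1 ≤ b < a ≤ 1 and D > 1. Then P(Y ≥ X) ≤ D^(−α²) where α = (a − b)/(√(1 − a²) + √(1 − b²)). -/

import Mathlib

open MeasureTheory ProbabilityTheory Real
open scoped NNReal ENNReal

section CEOsAux

variable {Ω : Type*} [MeasurableSpace Ω]

lemma ceos_exp_mul_pdf (m : ℝ) {v : ℝ≥0} (hv : v ≠ 0) (t x : ℝ) :
    rexp (t * x) * gaussianPDFReal m v x
      = rexp (t * m + t ^ 2 * v / 2) * gaussianPDFReal (m + t * v) v x := by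
  have hv' : (0:ℝ) < (v:ℝ) := NNReal.coe_pos.mpr (pos_iff_ne_zero.mpr hv)
  simp only [gaussianPDFReal]
  rw [mul_left_comm, mul_left_comm (rexp (t * m + t ^ 2 * v / 2)), ← Real.exp_add,
    ← Real.exp_add]
  congr 1
  field_simp
  ring

lemma ceos_integrable_exp_mul_pdf (m : ℝ) (v : ℝ≥0) (t : ℝ) :
    Integrable (fun x => rexp (t * x) * gaussianPDFReal m v x) := by
  by_cases hv : v = 0
  · simp only [hv, gaussianPDFReal_zero_var, Pi.zero_apply, mul_zero]
    exact integrable_zero _ _ _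
  · simp_rw [ceos_exp_mul_pdf m hv t]
    exact (integrable_gaussianPDFReal _ _).const_mul _

lemma ceos_withDensity_eq (m : ℝ) (v : ℝ≥0) :
    (volume.withDensity (gaussianPDF m v))
      = volume.withDensity (fun x => ((Real.toNNReal (gaussianPDFReal m v x) : ℝ≥0) : ℝ≥0∞)) :=
  rfl

lemma ceos_integral_exp_gaussianReal (m : ℝ) (v : ℝ≥0) (t : ℝ) :
    ∫ x, rexp (t * x) ∂(gaussianReal m v) = rexp (t * m + t ^ 2 * v / 2) := by
  by_cases hv : v = 0
  · simp [hv, gaussianReal_zero_var, integral_dirac]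
  · rw [gaussianReal_of_var_ne_zero _ hv, ceos_withDensity_eq,
      integral_withDensity_eq_integral_smul ((measurable_gaussianPDFReal m v).real_toNNReal) _]
    have : ∀ x, (Real.toNNReal (gaussianPDFReal m v x)) • rexp (t * x)
        = rexp (t * x) * gaussianPDFReal m v x := by
      intro x
      rw [NNReal.smul_def, Real.coe_toNNReal _ (gaussianPDFReal_nonneg m v x), smul_eq_mul]
      ring
    simp_rw [this, ceos_exp_mul_pdf m hv t]
    rw [integral_const_mul, integral_gaussianPDFReal_eq_one _ hv, mul_one]

lemma ceos_integrable_exp_gaussianReal (m : ℝ) (v : ℝ≥0) (t : ℝ) :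
    Integrable (fun x => rexp (t * x)) (gaussianReal m v) := by
  by_cases hv : v = 0
  · rw [hv, gaussianReal_zero_var]
    refine (integrable_const (rexp (t * m))).congr ?_
    rw [Filter.EventuallyEq, MeasureTheory.ae_dirac_eq]
    exact Filter.eventually_pure.mpr rfl
  · rw [gaussianReal_of_var_ne_zero _ hv, ceos_withDensity_eq,
      integrable_withDensity_iff_integrable_smul ((measurable_gaussianPDFReal m v).real_toNNReal)]
    have : ∀ x, (Real.toNNReal (gaussianPDFReal m v x)) • rexp (t * x)
        = rexp (t * x) * gaussianPDFReal m v x := by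
      intro x
      rw [NNReal.smul_def, Real.coe_toNNReal _ (gaussianPDFReal_nonneg m v x), smul_eq_mul]
      ring
    simp_rw [this]
    exact ceos_integrable_exp_mul_pdf m v t

lemma ceos_mgf_of_map (μ : Measure Ω) (X : Ω → ℝ) (hXm : Measurable X)
    (m : ℝ) (v : ℝ≥0) (h : μ.map X = gaussianReal m v) (t : ℝ) :
    mgf X μ t = rexp (t * m + t ^ 2 * v / 2) := by
  have : mgf X μ t = ∫ x, rexp (t * x) ∂(μ.map X) := by
    rw [integral_map hXm.aemeasurable ((measurable_id'.const_mul t).exp.aestronglyMeasurable)]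
    rfl
  rw [this, h, ceos_integral_exp_gaussianReal]

lemma ceos_integrable_of_map (μ : Measure Ω) (X : Ω → ℝ) (hXm : Measurable X)
    (m : ℝ) (v : ℝ≥0) (h : μ.map X = gaussianReal m v) (t : ℝ) :
    Integrable (fun ω => rexp (t * X ω)) μ := by
  have : Integrable (fun x => rexp (t * x)) (μ.map X) := by
    rw [h]; exact ceos_integrable_exp_gaussianReal m v t
  exact (integrable_map_measure ((measurable_id'.const_mul t).exp.aestronglyMeasurable) hXm.aemeasurable).mp this

end CEOsAux

/-- Equation (2) of the CEOs analysis: with `X ~ N(a√(2 ln D), 1 − a²)` and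
`Y ~ N(b√(2 ln D), 1 − b²)` independent, `−1 ≤ b < a ≤ 1`, `D > 1`, we have
`P(Y ≥ X) ≤ D^(−α²)` where `α = (a − b)/(√(1 − a²) + √(1 − b²))`. -/
theorem ceos_projection_compare
    {Ω : Type*} [MeasurableSpace Ω] (μ : Measure Ω) [IsProbabilityMeasure μ]
    (X Y : Ω → ℝ) (hXm : Measurable X) (hYm : Measurable Y)
    (a b D : ℝ) (hb : -1 ≤ b) (hba : b < a) (ha : a ≤ 1) (hD : 1 < D)
    (hX : μ.map X = gaussianReal (a * Real.sqrt (2 * Real.log D)) (Real.toNNReal (1 - a ^ 2)))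
    (hY : μ.map Y = gaussianReal (b * Real.sqrt (2 * Real.log D)) (Real.toNNReal (1 - b ^ 2)))
    (hInd : IndepFun X Y μ) :
    μ {ω | Y ω ≥ X ω} ≤
      ENNReal.ofReal
        (D ^ (-((a - b) / (Real.sqrt (1 - a ^ 2) + Real.sqrt (1 - b ^ 2))) ^ 2)) := by
  have hD0 : (0:ℝ) < D := lt_trans one_pos hD
  have hlogD : 0 < Real.log D := Real.log_pos hD
  have hb1 : -1 < a := lt_of_le_of_lt hb hba
  have ha2 : 0 ≤ 1 - a ^ 2 := by nlinarith
  have hb2 : 0 ≤ 1 - b ^ 2 := by nlinarith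
  by_cases hs : (1 - a ^ 2) + (1 - b ^ 2) = 0
  · -- degenerate case : a = 1, b = -1, the RHS is 1
    have h1 : 1 - a ^ 2 = 0 := by nlinarith
    have h2 : 1 - b ^ 2 = 0 := by nlinarith
    rw [h1, h2, Real.sqrt_zero, add_zero, div_zero]
    norm_num
    exact prob_le_one
  · have hs0 : 0 < (1 - a ^ 2) + (1 - b ^ 2) := lt_of_le_of_ne (by nlinarith) (Ne.symm hs)
    set s : ℝ := (1 - a ^ 2) + (1 - b ^ 2) with hs_def
    set L : ℝ := Real.sqrt (2 * Real.log D) with hL_def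
    have hL0 : 0 ≤ L := Real.sqrt_nonneg _
    have hL2 : L ^ 2 = 2 * Real.log D := Real.sq_sqrt (by linarith)
    set t : ℝ := (a - b) * L / s with ht_def
    have ht : 0 ≤ t := by
      apply div_nonneg (mul_nonneg (by linarith) hL0) hs0.le
    -- coercions of variances
    have hva : ((Real.toNNReal (1 - a ^ 2) : ℝ≥0) : ℝ) = 1 - a ^ 2 := Real.coe_toNNReal _ ha2
    have hvb : ((Real.toNNReal (1 - b ^ 2) : ℝ≥0) : ℝ) = 1 - b ^ 2 := Real.coe_toNNReal _ hb2
    -- independence of Y and -X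
    have hIndYX : IndepFun Y (-X) μ := by
      have := hInd.symm.comp (φ := id) (ψ := fun x : ℝ => -x) measurable_id measurable_neg
      exact this
    -- integrability
    have hIntX : Integrable (fun ω => rexp ((-t) * X ω)) μ :=
      ceos_integrable_of_map μ X hXm _ _ hX (-t)
    have hIntnX : Integrable (fun ω => rexp (t * (-X) ω)) μ := by
      have heq : (fun ω => rexp (t * (-X) ω)) = fun ω => rexp ((-t) * X ω) := by
        funext ω
        simp only [Pi.neg_apply, mul_neg, neg_mul]
      rw [heq]
      exact hIntX
    have hIntY : Integrable (fun ω => rexp (t * Y ω)) μ :=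
      ceos_integrable_of_map μ Y hYm _ _ hY t
    have hIntZ : Integrable (fun ω => rexp (t * (Y + -X) ω)) μ :=
      hIndYX.integrable_exp_mul_add hIntY hIntnX
    -- Chernoff bound
    have hch := measure_ge_le_exp_mul_mgf (μ := μ) (X := Y + -X) 0 ht hIntZ
    rw [hIndYX.mgf_add hIntY.aestronglyMeasurable hIntnX.aestronglyMeasurable, mgf_neg,
      ceos_mgf_of_map μ Y hYm _ _ hY t, ceos_mgf_of_map μ X hXm _ _ hX (-t)] at hch
    have hset : {ω | Y ω ≥ X ω} = {ω | (0:ℝ) ≤ (Y + -X) ω} := by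
      ext ω
      simp only [Set.mem_setOf_eq, Pi.add_apply, Pi.neg_apply, ge_iff_le]
      constructor
      · intro h; linarith
      · intro h; linarith
    -- compute the exponent
    have hmain : rexp (-t * 0) * (rexp (t * (b * L) + t ^ 2 * (Real.toNNReal (1 - b ^ 2)) / 2) *
        rexp (-t * (a * L) + (-t) ^ 2 * (Real.toNNReal (1 - a ^ 2)) / 2))
        = D ^ (-(((a - b) ^ 2) / s)) := by
      rw [hva, hvb, ← Real.exp_add, ← Real.exp_add, Real.rpow_def_of_pos hD0]
      congr 1
      have hs' : (1 - a ^ 2 + (1 - b ^ 2)) ≠ 0 := by rw [← hs_def]; exact hs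
      rw [ht_def, show Real.log D = L ^ 2 / 2 by linarith, hs_def]
      field_simp
      ring
    -- comparison of exponents
    have hw : 0 < Real.sqrt (1 - a ^ 2) + Real.sqrt (1 - b ^ 2) := by
      rcases lt_or_ge 0 (1 - a ^ 2) with h | h
      · have := Real.sqrt_pos.mpr h
        have := Real.sqrt_nonneg (1 - b ^ 2)
        linarith
      · have h2' : 0 < 1 - b ^ 2 := by nlinarith
        have := Real.sqrt_pos.mpr h2'
        have := Real.sqrt_nonneg (1 - a ^ 2)
        linarith
    have hw2 : s ≤ (Real.sqrt (1 - a ^ 2) + Real.sqrt (1 - b ^ 2)) ^ 2 := by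
      have h1 := Real.sq_sqrt ha2
      have h2 := Real.sq_sqrt hb2
      have h3 := Real.sqrt_nonneg (1 - a ^ 2)
      have h4 := Real.sqrt_nonneg (1 - b ^ 2)
      nlinarith [mul_nonneg h3 h4]
    have hcomp : D ^ (-(((a - b) ^ 2) / s))
        ≤ D ^ (-((a - b) / (Real.sqrt (1 - a ^ 2) + Real.sqrt (1 - b ^ 2))) ^ 2) := by
      apply Real.rpow_le_rpow_left_iff hD |>.mpr
      rw [div_pow, neg_le_neg_iff]
      exact div_le_div_of_nonneg_left (sq_nonneg _) hs0 hw2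
    -- conclude
    have hfin : (μ {ω | Y ω ≥ X ω}).toReal
        ≤ D ^ (-((a - b) / (Real.sqrt (1 - a ^ 2) + Real.sqrt (1 - b ^ 2))) ^ 2) := by
      rw [hset]
      calc (μ {ω | (0:ℝ) ≤ (Y + -X) ω}).toReal
          ≤ rexp (-t * 0) * (rexp (t * (b * L) + t ^ 2 * (Real.toNNReal (1 - b ^ 2)) / 2) *
            rexp (-t * (a * L) + (-t) ^ 2 * (Real.toNNReal (1 - a ^ 2)) / 2)) := hch
        _ = D ^ (-(((a - b) ^ 2) / s)) := hmain
        _ ≤ _ := hcomp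
    rw [← ENNReal.ofReal_toReal (measure_ne_top μ {ω | Y ω ≥ X ω})]
    exact ENNReal.ofReal_le_ofReal hfin
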